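/- Let V* ∈ R^{P×K} have orthonormal columns, let V, V^+ ∈ R^{P×K}, and let R = argmin_{Y ∈ O(K)} ||V - V* Y||_F and R^+ = argmin_{Y ∈ O(K)} ||V^+ - V* Y||_F. Then ||R^+ - R||_F ≤ 2||V^+ - V* R||_F. -/

import Mathlib

open Matrix

/-- Frobenius norm of a real matrix. -/
noncomputable def frobNorm {m n : ℕ} (A : Matrix (Fin m) (Fin n) ℝ) : ℝ :=
  Real.sqrt (∑ i, ∑ j, (A i j) ^ 2)

private noncomputable def toE {m n : ℕ} (A : Matrix (Fin m) (Fin n) ℝ) :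
    EuclideanSpace ℝ (Fin m × Fin n) := WithLp.toLp 2 fun p => A p.1 p.2

private lemma frobNorm_eq_norm {m n : ℕ} (A : Matrix (Fin m) (Fin n) ℝ) :
    frobNorm A = ‖toE A‖ := by
  rw [EuclideanSpace.norm_eq, frobNorm]
  congr 1
  rw [← Finset.sum_product']
  refine Finset.sum_congr rfl fun p _ => ?_
  simp [toE, Real.norm_eq_abs, sq_abs]

private lemma frobNorm_sub_le {m n : ℕ} (A B C : Matrix (Fin m) (Fin n) ℝ) :
    frobNorm (A - B) ≤ frobNorm (A - C) + frobNorm (C - B) := by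
  simp only [frobNorm_eq_norm]
  have h : toE (A - B) = toE (A - C) + toE (C - B) := by
    ext p; simp [toE]
  rw [h]
  exact norm_add_le _ _

private lemma sum_sq_eq_trace {m n : ℕ} (A : Matrix (Fin m) (Fin n) ℝ) :
    ∑ i, ∑ j, (A i j) ^ 2 = (Aᵀ * A).trace := by
  rw [Matrix.trace, Finset.sum_comm]
  refine Finset.sum_congr rfl fun j _ => ?_
  simp [Matrix.mul_apply, Matrix.diag, sq]

private lemma frobNorm_mul_orth {p k n : ℕ} (Vstar : Matrix (Fin p) (Fin k) ℝ)
    (hVstar : Vstarᵀ * Vstar = 1) (A : Matrix (Fin k) (Fin n) ℝ) :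
    frobNorm (Vstar * A) = frobNorm A := by
  unfold frobNorm
  rw [sum_sq_eq_trace, sum_sq_eq_trace]
  congr 1
  rw [Matrix.transpose_mul, Matrix.mul_assoc, ← Matrix.mul_assoc Vstarᵀ, hVstar, Matrix.one_mul]

theorem stmt_4 {P K : ℕ} (Vstar V Vplus : Matrix (Fin P) (Fin K) ℝ)
    (hVstar : Vstarᵀ * Vstar = 1)
    (R Rplus : Matrix (Fin K) (Fin K) ℝ)
    (hR : Rᵀ * R = 1) (hRplus : Rplusᵀ * Rplus = 1)
    (hRmin : ∀ Y : Matrix (Fin K) (Fin K) ℝ, Yᵀ * Y = 1 →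
      frobNorm (V - Vstar * R) ≤ frobNorm (V - Vstar * Y))
    (hRplusmin : ∀ Y : Matrix (Fin K) (Fin K) ℝ, Yᵀ * Y = 1 →
      frobNorm (Vplus - Vstar * Rplus) ≤ frobNorm (Vplus - Vstar * Y)) :
    frobNorm (Rplus - R) ≤ 2 * frobNorm (Vplus - Vstar * R) := by
  have h1 : frobNorm (Rplus - R) = frobNorm (Vstar * Rplus - Vstar * R) := by
    rw [← Matrix.mul_sub, frobNorm_mul_orth Vstar hVstar]
  have h2 : frobNorm (Vstar * Rplus - Vstar * R) ≤
      frobNorm (Vstar * Rplus - Vplus) + frobNorm (Vplus - Vstar * R) :=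
    frobNorm_sub_le _ _ _
  have h3 : frobNorm (Vstar * Rplus - Vplus) = frobNorm (Vplus - Vstar * Rplus) := by
    simp only [frobNorm_eq_norm]
    have : toE (Vstar * Rplus - Vplus) = -toE (Vplus - Vstar * Rplus) := by
      ext p; simp [toE]
    rw [this, norm_neg]
  have h4 := hRplusmin R hR
  rw [h1]
  calc frobNorm (Vstar * Rplus - Vstar * R)
      ≤ frobNorm (Vstar * Rplus - Vplus) + frobNorm (Vplus - Vstar * R) := h2
    _ = frobNorm (Vplus - Vstar * Rplus) + frobNorm (Vplus - Vstar * R) := by rw [h3]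
    _ ≤ frobNorm (Vplus - Vstar * R) + frobNorm (Vplus - Vstar * R) := by linarith
    _ = 2 * frobNorm (Vplus - Vstar * R) := by ring
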